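/- Let a, b be integers with a⁴ ≠ 1024·b, and let g = gcd(32, gcd(8a, a²)) (the positive greatest common divisor in ℤ). Let (x, y) ∈ ℤ² satisfy x⁴ − 4y² + a·x·y + b = 0. Then g divides 32x² − 8ax + 64y + a², the integer d₁ = (32x² − 8ax + 64y + a²)/g is nonzero, g² divides a⁴ − 1024b, d₁ divides (a⁴ − 1024b)/g², and 64·x²·(d₁·g) = (d₁·g)² + (a⁴ − 1024b) − 2a²·(d₁·g), i.e. 64x² = d₁·g + (a⁴ − 1024b)/(d₁·g) − 2a². (This rests on the identity (32x² − 8ax + 64y + a²)·(32x² + 8ax − 64y + a²) = a⁴ − 1024b, valid for integer points on the curve.) -/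

import Mathlib

theorem Qab_integral_points (a b : ℤ) (hab : a ^ 4 ≠ 1024 * b)
    (x y : ℤ) (hxy : x ^ 4 - 4 * y ^ 2 + a * x * y + b = 0) :
    let g : ℤ := Int.gcd 32 (Int.gcd (8 * a) (a ^ 2) : ℤ)
    let d₁ : ℤ := (32 * x ^ 2 - 8 * a * x + 64 * y + a ^ 2) / g
    g ∣ 32 * x ^ 2 - 8 * a * x + 64 * y + a ^ 2 ∧
      d₁ ≠ 0 ∧
      g ^ 2 ∣ a ^ 4 - 1024 * b ∧
      d₁ ∣ (a ^ 4 - 1024 * b) / g ^ 2 ∧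
      64 * x ^ 2 * (d₁ * g) =
        (d₁ * g) ^ 2 + (a ^ 4 - 1024 * b) - 2 * a ^ 2 * (d₁ * g) := by
  intro g d₁
  have hg32 : g ∣ 32 := Int.gcd_dvd_left _ _
  have hginner : g ∣ (Int.gcd (8 * a) (a ^ 2) : ℤ) := Int.gcd_dvd_right _ _
  have hg8a : g ∣ 8 * a := hginner.trans (Int.gcd_dvd_left _ _)
  have hga2 : g ∣ a ^ 2 := hginner.trans (Int.gcd_dvd_right _ _)
  have hgne : g ≠ 0 := by
    intro h
    rw [h] at hg32
    exact absurd (zero_dvd_iff.mp hg32) (by norm_num)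
  set D : ℤ := 32 * x ^ 2 - 8 * a * x + 64 * y + a ^ 2 with hDdef
  set D' : ℤ := 32 * x ^ 2 + 8 * a * x - 64 * y + a ^ 2 with hD'def
  have hD : g ∣ D := by
    have h1 : g ∣ 32 * x ^ 2 := hg32.mul_right _
    have h2 : g ∣ 8 * a * x := hg8a.mul_right _
    have h3 : g ∣ 64 * y := by have := hg32.mul_right (2 * y); rwa [show (32:ℤ) * (2 * y) = 64 * y by ring] at this
    have : g ∣ (32 * x ^ 2 - 8 * a * x + 64 * y + a ^ 2) :=
      ((h1.sub h2).add h3).add hga2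
    exact this
  have hD' : g ∣ D' := by
    have h1 : g ∣ 32 * x ^ 2 := hg32.mul_right _
    have h2 : g ∣ 8 * a * x := hg8a.mul_right _
    have h3 : g ∣ 64 * y := by have := hg32.mul_right (2 * y); rwa [show (32:ℤ) * (2 * y) = 64 * y by ring] at this
    exact ((h1.add h2).sub h3).add hga2
  have hprod : D * D' = a ^ 4 - 1024 * b := by
    rw [hDdef, hD'def]; linear_combination 1024 * hxy
  have hd1g : d₁ * g = D := Int.ediv_mul_cancel hD
  set d₂ : ℤ := D' / g with hd2def
  have hd2g : d₂ * g = D' := Int.ediv_mul_cancel hD'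
  have hDne : D ≠ 0 := by
    intro h
    apply hab
    have := hprod
    rw [h, zero_mul] at this
    linarith
  have hd1ne : d₁ ≠ 0 := by
    intro h
    apply hDne
    rw [← hd1g, h, zero_mul]
  have hfac : a ^ 4 - 1024 * b = (d₁ * d₂) * g ^ 2 := by
    rw [← hprod, ← hd1g, ← hd2g]; ring
  have hsq : g ^ 2 ∣ a ^ 4 - 1024 * b := ⟨d₁ * d₂, by rw [hfac]; ring⟩
  refine ⟨hD, hd1ne, hsq, ?_, ?_⟩
  · have : (a ^ 4 - 1024 * b) / g ^ 2 = d₁ * d₂ := by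
      rw [hfac]
      exact Int.mul_ediv_cancel _ (pow_ne_zero 2 hgne)
    rw [this]
    exact dvd_mul_right _ _
  · rw [hd1g]
    linear_combination hprod
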